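/- For all flags φ, ψ: φ ≤ ψ holds if and only if max(φ) ⊆ max(ψ) and every subalgebra that occurs in ψ but not in φ strictly contains max(φ). -/

import Mathlib

open scoped Classical
open Set

variable {L : Type*} [LieRing L] [LieAlgebra ℝ L] [FiniteDimensional ℝ L]

/-- A flag: a nonempty chain of Lie subalgebras, each strictly containing `H`. -/
def IsFlag (H : LieSubalgebra ℝ L) (s : Finset (LieSubalgebra ℝ L)) : Prop :=
  s.Nonempty ∧ IsChain (· ≤ ·) (s : Set (LieSubalgebra ℝ L)) ∧ ∀ K ∈ s, H < K

/-- The maximum of a flag. -/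
noncomputable def flagMax (s : Finset (LieSubalgebra ℝ L)) : LieSubalgebra ℝ L :=
  sSup (s : Set (LieSubalgebra ℝ L))

/-- An elementary move between flags. -/
def FlagStep (H : LieSubalgebra ℝ L) (s t : Finset (LieSubalgebra ℝ L)) : Prop :=
  IsFlag H s ∧ IsFlag H t ∧
    ((∃ K : LieSubalgebra ℝ L, flagMax s < K ∧ t = insert K s) ∨
      (∃ K ∈ s, K ≠ flagMax s ∧ t = s.erase K))

/-- The partial order on flags. -/
def FlagLE (H : LieSubalgebra ℝ L) (s t : Finset (LieSubalgebra ℝ L)) : Prop :=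
  Relation.ReflTransGen (FlagStep H) s t

lemma flagMax_isGreatest {s : Finset (LieSubalgebra ℝ L)} (hne : s.Nonempty)
    (hc : IsChain (· ≤ ·) (s : Set (LieSubalgebra ℝ L))) :
    IsGreatest (s : Set (LieSubalgebra ℝ L)) (flagMax s) := by
  obtain ⟨a, ha, hmax⟩ := s.exists_maximal hne
  have hg : IsGreatest (s : Set (LieSubalgebra ℝ L)) a := by
    refine ⟨ha, fun b hb => ?_⟩
    rcases eq_or_ne b a with rfl | hba
    · exact le_rfl
    · rcases hc hb ha hba with h | h
      · exact h
      · exact absurd (lt_of_le_of_ne h (Ne.symm hba)) (fun hlt => hlt.not_ge (hmax hb hlt.le))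
  have heq : flagMax s = a :=
    le_antisymm (sSup_le fun b hb => hg.2 hb) (le_sSup hg.1)
  rwa [heq]

lemma flagMax_mem {s : Finset (LieSubalgebra ℝ L)} (hne : s.Nonempty)
    (hc : IsChain (· ≤ ·) (s : Set (LieSubalgebra ℝ L))) : flagMax s ∈ s :=
  (flagMax_isGreatest hne hc).1

lemma le_flagMax {s : Finset (LieSubalgebra ℝ L)} {K : LieSubalgebra ℝ L}
    (hK : K ∈ s) : K ≤ flagMax s := le_sSup hK

lemma flagMax_mono {s t : Finset (LieSubalgebra ℝ L)} (h : s ⊆ t) :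
    flagMax s ≤ flagMax t := sSup_le_sSup (by exact_mod_cast h)

lemma flagMax_insert (K : LieSubalgebra ℝ L) (s : Finset (LieSubalgebra ℝ L)) :
    flagMax (insert K s) = K ⊔ flagMax s := by
  simp [flagMax, sSup_insert]

/-- Going up: from a flag to a larger flag all of whose new members strictly dominate the max. -/
lemma flagLE_of_subset (H : LieSubalgebra ℝ L) :
    ∀ n (s u : Finset (LieSubalgebra ℝ L)), (u \ s).card ≤ n → IsFlag H s → IsFlag H u →
      s ⊆ u → (∀ K ∈ u, K ∉ s → flagMax s < K) → FlagLE H s u := by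
  intro n
  induction n with
  | zero =>
    intro s u hcard hs hu hsub _
    have : u \ s = ∅ := Finset.card_eq_zero.mp (Nat.le_zero.mp hcard)
    have : u = s := Finset.Subset.antisymm (fun x hx => by
      by_contra hxs
      exact absurd (Finset.mem_sdiff.mpr ⟨hx, hxs⟩) (by simp [this])) hsub
    subst this
    exact Relation.ReflTransGen.refl
  | succ n ih =>
    intro s u hcard hs hu hsub hgt
    by_cases heq : u = s
    · subst heq; exact Relation.ReflTransGen.refl
    have hdne : (u \ s).Nonempty := by
      rw [Finset.sdiff_nonempty]
      intro h
      exact heq (Finset.Subset.antisymm h hsub)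
    obtain ⟨K0, hK0⟩ := hdne
    rw [Finset.mem_sdiff] at hK0
    set m := flagMax u with hm
    have hmmem : m ∈ u := flagMax_mem hu.1 hu.2.1
    have hsltm : flagMax s < m :=
      lt_of_lt_of_le (hgt K0 hK0.1 hK0.2) (le_flagMax hK0.1)
    have hmns : m ∉ s := fun h => absurd (le_flagMax h) (not_le_of_gt hsltm)
    set u' := u.erase m with hu'
    have hsub' : s ⊆ u' := fun x hx =>
      Finset.mem_erase.mpr ⟨fun h => hmns (h ▸ hx), hsub hx⟩
    have hu'sub : u' ⊆ u := Finset.erase_subset _ _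
    have hu'flag : IsFlag H u' :=
      ⟨hs.1.mono hsub', hu.2.1.mono (by exact_mod_cast hu'sub),
        fun K hK => hu.2.2 K (hu'sub hK)⟩
    have hmaxlt : flagMax u' < m := by
      have hle : flagMax u' ≤ m := flagMax_mono hu'sub
      have hne2 : flagMax u' ≠ m := by
        intro h
        have := flagMax_mem hu'flag.1 hu'flag.2.1
        rw [h] at this
        exact (Finset.notMem_erase m u) this
      exact lt_of_le_of_ne hle hne2
    have hcard' : (u' \ s).card ≤ n := by
      have h1 : u' \ s = (u \ s).erase m := Finset.erase_sdiff_comm u s m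
      have h2 : ((u \ s).erase m).card = (u \ s).card - 1 :=
        Finset.card_erase_of_mem (Finset.mem_sdiff.mpr ⟨hmmem, hmns⟩)
      have h3 : 1 ≤ (u \ s).card :=
        Finset.card_pos.mpr ⟨m, Finset.mem_sdiff.mpr ⟨hmmem, hmns⟩⟩
      rw [h1, h2]
      omega
    have hstep : FlagStep H u' u := by
      refine ⟨hu'flag, hu, Or.inl ⟨m, hmaxlt, ?_⟩⟩
      exact (Finset.insert_erase hmmem).symm
    exact Relation.ReflTransGen.tail
      (ih s u' hcard' hs hu'flag hsub' fun K hK hKs => hgt K (hu'sub hK) hKs) hstep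

/-- Going down: erasing non-maximal elements down to a sub-flag with the same max. -/
lemma flagLE_to_subset (H : LieSubalgebra ℝ L) :
    ∀ n (u t : Finset (LieSubalgebra ℝ L)), (u \ t).card ≤ n → IsFlag H u → IsFlag H t →
      t ⊆ u → flagMax u = flagMax t → FlagLE H u t := by
  intro n
  induction n with
  | zero =>
    intro u t hcard hu ht hsub _
    have h0 : u \ t = ∅ := Finset.card_eq_zero.mp (Nat.le_zero.mp hcard)
    have : u = t := Finset.Subset.antisymm (fun x hx => by
      by_contra hxt
      exact absurd (Finset.mem_sdiff.mpr ⟨hx, hxt⟩) (by simp [h0])) hsub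
    subst this
    exact Relation.ReflTransGen.refl
  | succ n ih =>
    intro u t hcard hu ht hsub hmax
    by_cases heq : u = t
    · subst heq; exact Relation.ReflTransGen.refl
    have hdne : (u \ t).Nonempty := by
      rw [Finset.sdiff_nonempty]
      intro h
      exact heq (Finset.Subset.antisymm h hsub)
    obtain ⟨K, hK⟩ := hdne
    rw [Finset.mem_sdiff] at hK
    have hKne : K ≠ flagMax u := by
      intro h
      have : flagMax t ∈ t := flagMax_mem ht.1 ht.2.1
      rw [← hmax, ← h] at this
      exact hK.2 this
    set u' := u.erase K with hu'
    have hsub' : t ⊆ u' := fun x hx =>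
      Finset.mem_erase.mpr ⟨fun h => hK.2 (h ▸ hx), hsub hx⟩
    have hu'sub : u' ⊆ u := Finset.erase_subset _ _
    have hu'flag : IsFlag H u' :=
      ⟨ht.1.mono hsub', hu.2.1.mono (by exact_mod_cast hu'sub),
        fun K' hK' => hu.2.2 K' (hu'sub hK')⟩
    have hmax' : flagMax u' = flagMax t :=
      le_antisymm (le_trans (flagMax_mono hu'sub) (le_of_eq hmax)) (flagMax_mono hsub')
    have hcard' : (u' \ t).card ≤ n := by
      have h1 : u' \ t = (u \ t).erase K := Finset.erase_sdiff_comm u t K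
      have h2 : ((u \ t).erase K).card = (u \ t).card - 1 :=
        Finset.card_erase_of_mem (Finset.mem_sdiff.mpr hK)
      have h3 : 1 ≤ (u \ t).card := Finset.card_pos.mpr ⟨K, Finset.mem_sdiff.mpr hK⟩
      rw [h1, h2]
      omega
    have hstep : FlagStep H u u' := ⟨hu, hu'flag, Or.inr ⟨K, hK.1, hKne, rfl⟩⟩
    exact Relation.ReflTransGen.head hstep (ih u' t hcard' hu'flag ht hsub' hmax')

lemma flagStep_R {H : LieSubalgebra ℝ L} {b c : Finset (LieSubalgebra ℝ L)}
    (hstep : FlagStep H b c) :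
    flagMax b ≤ flagMax c ∧ ∀ K ∈ c, K ∉ b → flagMax b < K := by
  obtain ⟨hbflag, hcflag, hcase⟩ := hstep
  rcases hcase with ⟨K, hKlt, rfl⟩ | ⟨K, hKmem, hKne, rfl⟩
  · constructor
    · rw [flagMax_insert]; exact le_sup_right
    · intro K' hK' hK'n
      rcases Finset.mem_insert.mp hK' with rfl | h
      · exact hKlt
      · exact absurd h hK'n
  · constructor
    · refine le_flagMax (Finset.mem_erase.mpr ⟨?_, flagMax_mem hbflag.1 hbflag.2.1⟩)
      exact fun h => hKne (by rw [← h])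
    · intro K' hK' hK'n
      exact absurd (Finset.erase_subset _ _ hK') hK'n

-- STATEMENT 2
theorem flagLE_iff (H : LieSubalgebra ℝ L) (hprop : H ≠ ⊤)
    (s t : Finset (LieSubalgebra ℝ L)) (hs : IsFlag H s) (ht : IsFlag H t) :
    FlagLE H s t ↔ flagMax s ≤ flagMax t ∧ ∀ K ∈ t, K ∉ s → flagMax s < K := by
  constructor
  · intro h
    induction h with
    | refl => exact ⟨le_rfl, fun K hK hKn => absurd hK hKn⟩
    | tail hab hstep ih =>
      have ih' := ih hstep.1
      have hR := flagStep_R hstep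
      refine ⟨le_trans ih'.1 hR.1, fun K hK hKs => ?_⟩
      by_cases hKb : flagMax s < K
      · exact hKb
      · exact absurd (hR.2 K hK fun hKb2 => hKb (ih'.2 K hKb2 hKs))
          fun h => hKb (lt_of_le_of_lt ih'.1 h)
  · rintro ⟨hle, hgt⟩
    set u := s ∪ t with hu
    have hsub_s : s ⊆ u := Finset.subset_union_left
    have hsub_t : t ⊆ u := Finset.subset_union_right
    have huchain : IsChain (· ≤ ·) (u : Set (LieSubalgebra ℝ L)) := by
      intro a ha b hb hab
      simp only [hu, Finset.coe_union, Set.mem_union, Finset.mem_coe] at ha hb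
      have key : ∀ x y : LieSubalgebra ℝ L,
          (x ∈ s ∨ x ∈ t) → (y ∈ s ∨ y ∈ t) → x ≠ y → x ≤ y ∨ y ≤ x := by
        intro x y hx hy hxy
        rcases hx with hx | hx <;> rcases hy with hy | hy
        · exact hs.2.1 hx hy hxy
        · by_cases hys : y ∈ s
          · exact hs.2.1 hx hys hxy
          · exact Or.inl (le_of_lt (lt_of_le_of_lt (le_flagMax hx) (hgt y hy hys)))
        · by_cases hxs : x ∈ s
          · exact hs.2.1 hxs hy hxy
          · exact Or.inr (le_of_lt (lt_of_le_of_lt (le_flagMax hy) (hgt x hx hxs)))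
        · exact ht.2.1 hx hy hxy
      exact key a b ha hb hab
    have huflag : IsFlag H u :=
      ⟨hs.1.mono hsub_s, huchain, fun K hK => by
        rcases Finset.mem_union.mp hK with h | h
        · exact hs.2.2 K h
        · exact ht.2.2 K h⟩
    have humax : flagMax u = flagMax t := by
      refine le_antisymm (sSup_le fun K hK => ?_) (flagMax_mono hsub_t)
      rcases Finset.mem_union.mp (by exact_mod_cast hK) with h | h
      · exact le_trans (le_flagMax h) hle
      · exact le_flagMax h
    have h1 : FlagLE H s u := by
      refine flagLE_of_subset H (u \ s).card s u le_rfl hs huflag hsub_s ?_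
      intro K hK hKs
      rcases Finset.mem_union.mp hK with h | h
      · exact absurd h hKs
      · exact hgt K h hKs
    have h2 : FlagLE H u t :=
      flagLE_to_subset H (u \ t).card u t le_rfl huflag ht hsub_t humax
    exact Relation.ReflTransGen.trans h1 h2
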